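/- Let V be a real vector space with complex structure J and subspace W ⊆ V, F an alternating form on W. The condition J_J(τ^F W) = τ^F W, where J_J(u,ξ) = (Ju, -J*ξ), holds if and only if J(W) = W and F(Ju, Jw) = F(u,w) for all u,w ∈ W. -/
import Mathlib


open Module

/-- The `F`-rotated generalized tangent space
`τ^F W = {(u,ξ) : u ∈ W, ξ|_W = F(u,·)}`. -/
def tauF {V : Type*} [AddCommGroup V] [Module ℝ V]
    (W : Submodule ℝ V) (F : LinearMap.BilinForm ℝ W) :
    Set (V × Module.Dual ℝ V) :=
  {p | ∃ hu : p.1 ∈ W, ∀ (w : V) (hw : w ∈ W), p.2 w = F ⟨p.1, hu⟩ ⟨w, hw⟩}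

/-- `J_J(τ^F W) = τ^F W` holds if and only if `J(W) = W` and
`F(Ju,Jw) = F(u,w)` for all `u,w ∈ W` (the B-brane condition). -/
theorem stmt18 {V : Type*} [AddCommGroup V] [Module ℝ V] [FiniteDimensional ℝ V]
    (J : Module.End ℝ V) (hJ2 : J * J = -1)
    (W : Submodule ℝ V) (F : LinearMap.BilinForm ℝ W) (hFalt : F.IsAlt) :
    (fun q : V × Module.Dual ℝ V => (J q.1, -(q.2.comp J))) '' tauF W F
        = tauF W F ↔
      (W.map J = W ∧
        ∀ (u w : V) (hu : u ∈ W) (hw : w ∈ W)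
          (hJu : J u ∈ W) (hJw : J w ∈ W),
          F ⟨J u, hJu⟩ ⟨J w, hJw⟩ = F ⟨u, hu⟩ ⟨w, hw⟩) := by
  have hJJ : ∀ v : V, J (J v) = -v := by
    intro v
    have := congrArg (fun f : Module.End ℝ V => f v) hJ2
    simpa [Module.End.mul_apply] using this
  constructor
  · intro h
    have h1 : ∀ p ∈ tauF W F, (J p.1, -(p.2.comp J)) ∈ tauF W F := by
      intro p hp
      rw [← h]
      exact ⟨p, hp, rfl⟩
    obtain ⟨W', hW'⟩ := Submodule.exists_isCompl W
    set π := W.linearProjOfIsCompl W' hW' with hπ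
    have hext : ∀ (u : V) (hu : u ∈ W),
        (u, (F ⟨u, hu⟩).comp (π : V →ₗ[ℝ] W)) ∈ tauF W F := by
      intro u hu
      refine ⟨hu, fun w hw => ?_⟩
      have : π w = ⟨w, hw⟩ := Submodule.linearProjOfIsCompl_apply_left hW' ⟨w, hw⟩
      simp [this]
    constructor
    · apply le_antisymm
      · rintro x ⟨u, hu, rfl⟩
        exact (h1 _ (hext u hu)).1
      · intro u hu
        have hmem : (u, (F ⟨u, hu⟩).comp (π : V →ₗ[ℝ] W)) ∈
            (fun q : V × Module.Dual ℝ V => (J q.1, -(q.2.comp J))) '' tauF W F := by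
          rw [h]; exact hext u hu
        obtain ⟨⟨v, η⟩, hvτ, heq⟩ := hmem
        have hv : v ∈ W := hvτ.1
        have : J v = u := congrArg Prod.fst heq
        exact ⟨v, hv, this⟩
    · intro u w hu hw hJu hJw
      obtain ⟨hu', hrel⟩ := h1 _ (hext u hu)
      have key := hrel (J w) hJw
      have hπw : π (J (J w)) = -⟨w, hw⟩ := by
        rw [hJJ w]
        have : π w = ⟨w, hw⟩ := Submodule.linearProjOfIsCompl_apply_left hW' ⟨w, hw⟩
        rw [map_neg, this]
      simp only [LinearMap.neg_apply, LinearMap.comp_apply] at key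
      rw [hπw] at key
      simp only [map_neg, neg_neg] at key
      rw [← key]
  · rintro ⟨hJW, hF⟩
    have hmem : ∀ u ∈ W, J u ∈ W := fun u hu => hJW ▸ Submodule.mem_map_of_mem hu
    have key : ∀ (u : V) (ξ : Module.Dual ℝ V), (u, ξ) ∈ tauF W F →
        ∀ (w : V) (hw : w ∈ W) (hJu : J u ∈ W),
          ξ (J w) = -(F ⟨J u, hJu⟩ ⟨w, hw⟩) := by
      rintro u ξ ⟨hu, hrel⟩ w hw hJu
      have h1 : ξ (J w) = F ⟨u, hu⟩ ⟨J w, hmem w hw⟩ := hrel (J w) (hmem w hw)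
      have h2 := hF u (J w) hu (hmem w hw) hJu (hmem (J w) (hmem w hw))
      have h3 : (⟨J (J w), hmem (J w) (hmem w hw)⟩ : W) = -(⟨w, hw⟩ : W) :=
        Subtype.ext (hJJ w)
      rw [h3, map_neg] at h2
      rw [h1, ← h2]
    ext p
    constructor
    · rintro ⟨⟨u, ξ⟩, hτ, rfl⟩
      have hu : u ∈ W := hτ.1
      refine ⟨hmem u hu, fun w hw => ?_⟩
      have := key u ξ hτ w hw (hmem u hu)
      simp only [LinearMap.neg_apply, LinearMap.comp_apply]
      rw [this, neg_neg]
    · rintro ⟨hu, hrel⟩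
      obtain ⟨u, ξ⟩ := p
      refine ⟨(-(J u), ξ.comp J), ?_, ?_⟩
      · refine ⟨neg_mem (hmem u hu), fun w hw => ?_⟩
        have h3 : (⟨-(J u), neg_mem (hmem u hu)⟩ : W) = -(⟨J u, hmem u hu⟩ : W) :=
          Subtype.ext rfl
        rw [h3, map_neg, LinearMap.neg_apply, LinearMap.comp_apply]
        exact key u ξ ⟨hu, hrel⟩ w hw (hmem u hu)
      · simp only [Prod.mk.injEq]
        constructor
        · rw [map_neg, hJJ u, neg_neg]
        · ext v
          simp [hJJ v]
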